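/- Every set of reals satisfying S₁(B_Γ,B_Γ) is a σ-set: if X ⊆ ℝ is such that for every sequence (U_n) of countable γ-covers of X by Borel subsets of ℝ there exist U_n ∈ U_n with {U_n : n ∈ ℕ} a γ-cover of X, then every subset of X which is relatively F_σ in X is relatively G_δ in X. -/

import Mathlib

open Filter Set Topology

/-- A γ-cover of `X`: an infinite family of sets such that every point of `X`
belongs to all but finitely many members. -/
def IsGammaCoverOf (X : Set ℝ) (𝒰 : Set (Set ℝ)) : Prop :=
  𝒰.Infinite ∧ ∀ x ∈ X, {U ∈ 𝒰 | x ∉ U}.Finite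

def S1BorelGammaGamma (X : Set ℝ) : Prop :=
  ∀ 𝒰 : ℕ → Set (Set ℝ),
    (∀ n, (𝒰 n).Countable ∧ (∀ U ∈ 𝒰 n, MeasurableSet U) ∧ IsGammaCoverOf X (𝒰 n)) →
    ∃ U : ℕ → Set ℝ, (∀ n, U n ∈ 𝒰 n) ∧ IsGammaCoverOf X (Set.range U)


/-- Auxiliary closed set: points of absolute value at most `m` that are at distance
at least `1/(m+1)` from every point of `F`. -/
def gH (F : Set ℝ) (m : ℕ) : Set ℝ :=
  {t : ℝ | |t| ≤ m ∧ ∀ y ∈ F, 1/((m:ℝ)+1) ≤ |t - y|}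

lemma gH_closed (F : Set ℝ) (m : ℕ) : IsClosed (gH F m) := by
  have h : gH F m = {t : ℝ | |t| ≤ m} ∩ ⋂ y ∈ F, {t : ℝ | 1/((m:ℝ)+1) ≤ |t - y|} := by
    ext t; simp [gH]
  rw [h]
  exact (isClosed_le continuous_abs continuous_const).inter
    (isClosed_biInter fun y _ =>
      isClosed_le continuous_const ((continuous_id.sub continuous_const).abs))

lemma gH_mono (F : Set ℝ) : Monotone (gH F) := by
  intro m m' hm t ht
  have hmm : (m:ℝ) ≤ m' := by exact_mod_cast hm
  refine ⟨ht.1.trans hmm, fun y hy => le_trans ?_ (ht.2 y hy)⟩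
  apply one_div_le_one_div_of_le (by positivity)
  linarith

lemma gH_disj (F : Set ℝ) (m : ℕ) {t : ℝ} (ht : t ∈ gH F m) : t ∉ F := by
  intro htF
  have h1 := ht.2 t htF
  have h2 : |t - t| = 0 := by simp
  have h3 : (0:ℝ) < 1/((m:ℝ)+1) := by positivity
  rw [h2] at h1
  linarith

lemma gH_eventually (F : Set ℝ) (hF : IsClosed F) (t : ℝ) (ht : t ∉ F) :
    ∃ M : ℕ, ∀ m ≥ M, t ∈ gH F m := by
  obtain ⟨δ, hδ, hδle⟩ : ∃ δ : ℝ, 0 < δ ∧ ∀ y ∈ F, δ ≤ |t - y| := by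
    rcases F.eq_empty_or_nonempty with rfl | hne
    · exact ⟨1, one_pos, by simp⟩
    · refine ⟨Metric.infDist t F, (hF.notMem_iff_infDist_pos hne).mp ht, fun y hy => ?_⟩
      rw [← Real.dist_eq]
      exact Metric.infDist_le_dist_of_mem hy
  refine ⟨max ⌈|t|⌉₊ ⌈1/δ⌉₊, fun m hm => ⟨?_, fun y hy => ?_⟩⟩
  · calc |t| ≤ (⌈|t|⌉₊:ℝ) := Nat.le_ceil _
      _ ≤ m := by exact_mod_cast le_trans (le_max_left _ _) hm
  · have h1 : 1/δ ≤ (m:ℝ) :=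
      le_trans (Nat.le_ceil _) (by exact_mod_cast le_trans (le_max_right _ _) hm)
    have h2 : 1/((m:ℝ)+1) ≤ δ := by
      calc 1/((m:ℝ)+1) ≤ 1/(1/δ) := one_div_le_one_div_of_le (by positivity) (by linarith)
        _ = δ := one_div_one_div δ
    exact h2.trans (hδle y hy)

lemma gV_ne_univ (F : Set ℝ) (hF : IsClosed F) (hFne : F ≠ univ) (m : ℕ) :
    ∃ t : ℝ, t ∉ gH F m ∪ F := by
  rcases F.eq_empty_or_nonempty with rfl | hne
  · refine ⟨(m:ℝ)+1, fun hmem => ?_⟩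
    rcases hmem with hH | hF'
    · have h1 := hH.1
      have h2 : |(m:ℝ)+1| = (m:ℝ)+1 := abs_of_pos (by positivity)
      rw [h2] at h1; linarith
    · exact hF'
  · obtain ⟨u, hu⟩ := nonempty_frontier_iff.mpr ⟨hne, hFne⟩
    have huF : u ∈ F := hF.closure_eq ▸ frontier_subset_closure hu
    have hucl : u ∈ closure Fᶜ := by
      rw [frontier_eq_closure_inter_closure] at hu
      exact hu.2
    obtain ⟨v, hvF, hv⟩ := Metric.mem_closure_iff.mp hucl (1/((m:ℝ)+1)) (by positivity)
    refine ⟨v, fun hmem => ?_⟩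
    rcases hmem with hH | hF'
    · have h1 := hH.2 u huF
      rw [Real.dist_eq] at hv
      have h2 : |v - u| = |u - v| := abs_sub_comm _ _
      rw [h2] at h1
      linarith
    · exact hvF hF'

/-- Every set of reals satisfying `S₁(B_Γ, B_Γ)` is a σ-set: every relatively
F_σ subset of `X` is relatively G_δ. -/
theorem S1BorelGammaGamma_implies_sigma_set (X : Set ℝ)
    (h : S1BorelGammaGamma X) :
    ∀ A : Set X,
      (∃ C : ℕ → Set X, (∀ n, IsClosed (C n)) ∧ A = ⋃ n, C n) → IsGδ A := by
  classical
  rintro A ⟨C, hC, rfl⟩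
  -- increasing closed sets
  set C' : ℕ → Set X := fun n => ⋃ j ≤ n, C j with hC'def
  have hC'mono : Monotone C' := by
    intro a b hab x hx
    simp only [hC'def, mem_iUnion] at hx ⊢
    obtain ⟨j, hj, hx⟩ := hx
    exact ⟨j, hj.trans hab, hx⟩
  have hC'closed : ∀ n, IsClosed (C' n) :=
    fun n => (Set.finite_Iic n).isClosed_biUnion (fun j _ => hC j)
  by_cases hbig : ∃ n, C' n = univ
  · obtain ⟨n, hn⟩ := hbig
    have hA : (⋃ n, C n) = univ := by
      apply eq_univ_of_univ_subset
      rw [← hn]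
      exact iUnion₂_subset fun j _ => subset_iUnion C j
    rw [hA]; exact IsGδ.univ
  push_neg at hbig
  have hex : ∀ n, ∃ x : X, x ∉ C' n := by
    intro n
    exact (ne_univ_iff_exists_notMem _).mp (hbig n)
  -- closed sets in ℝ inducing C'
  have hE : ∀ n, ∃ E : Set ℝ, IsClosed E ∧ Subtype.val ⁻¹' E = C' n := by
    intro n
    have h1 := hC'closed n
    rw [isClosed_induced_iff] at h1
    obtain ⟨E, hE1, hE2⟩ := h1
    exact ⟨E, hE1, hE2⟩
  choose E hEc hEp using hE
  set F : ℕ → Set ℝ := fun n => ⋃ j ≤ n, E j with hFdef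
  have hFc : ∀ n, IsClosed (F n) :=
    fun n => (Set.finite_Iic n).isClosed_biUnion (fun j _ => hEc j)
  have hFmono : Monotone F := by
    intro a b hab t ht
    simp only [hFdef, mem_iUnion] at ht ⊢
    obtain ⟨j, hj, ht⟩ := ht
    exact ⟨j, hj.trans hab, ht⟩
  have hFp : ∀ n, Subtype.val ⁻¹' F n = C' n := by
    intro n
    ext x
    simp only [hFdef, preimage_iUnion, mem_iUnion, mem_preimage]
    constructor
    · rintro ⟨j, hj, hx⟩
      have : x ∈ C' j := by rw [← hEp j]; exact hx
      exact hC'mono hj this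
    · intro hx
      refine ⟨n, le_rfl, ?_⟩
      have h2 : x ∈ Subtype.val ⁻¹' E n := by rw [hEp n]; exact hx
      exact h2
  have hFne : ∀ n, F n ≠ univ := by
    intro n hFun
    obtain ⟨x, hx⟩ := hex n
    apply hx
    rw [← hFp n, hFun]
    trivial
  -- the covers
  set V : ℕ → ℕ → Set ℝ := fun n m => gH (F n) m ∪ F n with hVdef
  set W : ℕ → ℕ → Set ℝ := fun n m => ⋂ j ≤ n, V j m with hWdef
  have hWclosed : ∀ n m, IsClosed (W n m) :=
    fun n m => isClosed_biInter (fun j _ => (gH_closed (F j) m).union (hFc j))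
  have hWmono : ∀ n, Monotone (W n) := by
    intro n a b hab
    exact iInter₂_mono fun j _ => union_subset_union_left _ (gH_mono (F j) hab)
  have hWsub : ∀ n m j, j ≤ n → W n m ⊆ V j m := by
    intro n m j hj
    exact biInter_subset_of_mem hj
  -- eventual membership for each point
  have hVev : ∀ (j : ℕ) (t : ℝ), ∃ M : ℕ, ∀ m ≥ M, t ∈ V j m := by
    intro j t
    by_cases htF : t ∈ F j
    · exact ⟨0, fun m _ => Or.inr htF⟩
    · obtain ⟨M, hM⟩ := gH_eventually (F j) (hFc j) t htF
      exact ⟨M, fun m hm => Or.inl (hM m hm)⟩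
  choose Mf hMf using hVev
  have hWev : ∀ (n : ℕ) (t : ℝ) (m : ℕ),
      (Finset.range (n+1)).sup (fun j => Mf j t) ≤ m → t ∈ W n m := by
    intro n t m hm
    apply mem_iInter₂.mpr
    intro j hj
    exact hMf j t m (le_trans (Finset.le_sup (f := fun j => Mf j t) (Finset.mem_range.mpr (Nat.lt_succ_of_le hj))) hm)
  -- each W n m is proper
  have hWne : ∀ n m, ∃ t : ℝ, t ∉ W n m := by
    intro n m
    obtain ⟨t, ht⟩ := gV_ne_univ (F n) (hFc n) (hFne n) m
    exact ⟨t, fun hc => ht (hWsub n m n le_rfl hc)⟩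
  -- infinitude of each cover
  have hUinf : ∀ n, (Set.range (W n)).Infinite := by
    intro n hfin
    obtain ⟨a, ha, hmax⟩ := Set.Finite.exists_maximalFor id _ hfin ⟨W n 0, mem_range_self 0⟩
    obtain ⟨M, rfl⟩ := ha
    have hall : ∀ m, W n m ⊆ W n M := by
      intro m
      have h1 : W n M ⊆ W n (max m M) := hWmono n (le_max_right _ _)
      have h2 : id (W n M) = id (W n (max m M)) := le_antisymm h1 (hmax (mem_range_self _) h1)
      simp only [id] at h2
      rw [h2]
      exact hWmono n (le_max_left _ _)
    obtain ⟨t, ht⟩ := hWne n M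
    exact ht (hall _ (hWev n t _ le_rfl))
  -- finite-miss for each cover
  have hmiss : ∀ n, ∀ x ∈ X, {Uu ∈ Set.range (W n) | x ∉ Uu}.Finite := by
    intro n x _
    apply Set.Finite.subset ((Set.finite_Iio ((Finset.range (n+1)).sup (fun j => Mf j x))).image (W n))
    rintro Uu ⟨⟨m, rfl⟩, hxU⟩
    by_cases hm : m < (Finset.range (n+1)).sup (fun j => Mf j x)
    · exact mem_image_of_mem _ hm
    · exact absurd (hWev n x m (le_of_not_gt hm)) hxU
  -- apply the selection principle
  obtain ⟨U, hUsel, hUcov⟩ := h (fun n => Set.range (W n)) (fun n =>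
    ⟨countable_range _,
     fun Uu hUu => by obtain ⟨m, rfl⟩ := hUu; exact (hWclosed n m).measurableSet,
     hUinf n, hmiss n⟩)
  choose ms hms using hUsel
  -- first-occurrence indices
  set I : Set ℕ := {n | ∀ k < n, U k ≠ U n} with hIdef
  have hIinf : I.Infinite := by
    intro hfin
    apply hUcov.1
    apply (hfin.image U).subset
    rintro _ ⟨n, rfl⟩
    have hn : ∃ k, U k = U n := ⟨n, rfl⟩
    refine ⟨Nat.find hn, ?_, Nat.find_spec hn⟩
    intro k hk hke
    exact Nat.find_min hn hk (hke.trans (Nat.find_spec hn))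
  set e : ℕ → ℕ := Nat.nth (· ∈ I) with hedef
  have heI : ∀ i, e i ∈ I := fun i => Nat.nth_mem_of_infinite hIinf i
  have hemono : StrictMono e := Nat.nth_strictMono hIinf
  have hele : ∀ i, i ≤ e i := fun i => hemono.le_apply
  have hUinj : ∀ i i', i < i' → U (e i) ≠ U (e i') := by
    intro i i' hii
    exact heI i' (e i) (hemono hii)
  -- cofinite membership along the subsequence
  have hcof : ∀ x : X, ∃ k, ∀ i ≥ k, (x:ℝ) ∈ U (e i) := by
    intro x
    have hfin : {i : ℕ | (x:ℝ) ∉ U (e i)}.Finite := by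
      apply Set.Finite.of_finite_image (f := fun i => U (e i))
      · apply (hUcov.2 x x.2).subset
        rintro _ ⟨i, hi, rfl⟩
        exact ⟨⟨e i, rfl⟩, hi⟩
      · intro a _ b _ hab
        rcases lt_trichotomy a b with hl | hl | hl
        · exact absurd hab (hUinj a b hl)
        · exact hl
        · exact absurd hab.symm (hUinj b a hl)
    obtain ⟨k, hk⟩ := hfin.bddAbove
    refine ⟨k+1, fun i hi => ?_⟩
    by_contra hxi
    have := hk hxi
    omega
  -- the Gδ representation
  have key : (⋃ n, C n) =
      ⋂ k : ℕ, (⋂ i, ⋂ (_ : k ≤ i), (Subtype.val ⁻¹' gH (F i) (ms (e i)) : Set X))ᶜ := by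
    ext x
    simp only [mem_iUnion, mem_iInter, mem_compl_iff, mem_preimage]
    constructor
    · rintro ⟨n₀, hn₀⟩ k hS
      have hx1 : x ∈ C' (max k n₀) :=
        mem_iUnion₂.mpr ⟨n₀, le_max_right _ _, hn₀⟩
      have hx2 : (x:ℝ) ∈ F (max k n₀) := by
        rw [← hFp (max k n₀)] at hx1
        exact hx1
      exact gH_disj _ _ (hS (max k n₀) (le_max_left _ _)) hx2
    · intro hall
      by_contra hnx
      push_neg at hnx
      have hxF : ∀ n, (x:ℝ) ∉ F n := by
        intro n hn
        have : x ∈ C' n := by rw [← hFp n]; exact hn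
        obtain ⟨j, _, hj⟩ := mem_iUnion₂.mp this
        exact hnx j hj
      obtain ⟨k, hk⟩ := hcof x
      apply hall k
      intro i hi
      have h1 : (x:ℝ) ∈ W (e i) (ms (e i)) := by
        rw [hms (e i)]
        exact hk i hi
      have h2 : (x:ℝ) ∈ V i (ms (e i)) := hWsub (e i) (ms (e i)) i (hele i) h1
      rcases h2 with h2 | h2
      · exact h2
      · exact absurd h2 (hxF i)
  rw [key]
  apply IsGδ.iInter
  intro k
  apply IsOpen.isGδ
  rw [isOpen_compl_iff]
  exact isClosed_iInter fun i => isClosed_iInter fun _ =>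
    (gH_closed (F i) (ms (e i))).preimage continuous_subtype_val
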